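/- If r₁ = r₂ = r₃ = r₄ = r > r₅ = s ≥ 0 are nonnegative integers, then ∑_{k≥0} 1/((k+r+1)⁴(k+s+1)) = (1/(r-s)⁴)·∑_{j=s+1}^{r} 1/j - (1/(r-s)³)·(ζ(2) - ∑_{j=1}^{r} 1/j²) - (1/(r-s)²)·(ζ(3) - ∑_{j=1}^{r} 1/j³) - (1/(r-s))·(ζ(4) - ∑_{j=1}^{r} 1/j⁴). -/

import Mathlib

open Filter Finset

-- telescoping per level
lemma telescope_hasSum (n : ℕ) :
    HasSum (fun k : ℕ => 1 / ((k : ℝ) + n + 1) - 1 / ((k : ℝ) + n + 2)) (1 / ((n : ℝ) + 1)) := by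
  set f : ℕ → ℝ := fun k => 1 / ((k : ℝ) + n + 1) with hf
  have hstep : ∀ k : ℕ, 1 / ((k : ℝ) + n + 2) = f (k + 1) := by
    intro k; simp only [hf]; push_cast; ring_nf
  have hnonneg : ∀ k : ℕ, 0 ≤ 1 / ((k : ℝ) + n + 1) - 1 / ((k : ℝ) + n + 2) := by
    intro k
    have h1 : (0:ℝ) < (k : ℝ) + n + 1 := by positivity
    have h2 : (k:ℝ) + n + 1 ≤ (k : ℝ) + n + 2 := by linarith
    have := one_div_le_one_div_of_le h1 h2
    linarith
  rw [hasSum_iff_tendsto_nat_of_nonneg hnonneg]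
  have hps : ∀ N : ℕ, ∑ i ∈ range N, (1 / ((i : ℝ) + n + 1) - 1 / ((i : ℝ) + n + 2))
      = f 0 - f N := by
    intro N
    rw [← Finset.sum_range_sub' f N]
    exact Finset.sum_congr rfl fun i _ => by rw [hstep]
  simp only [hps]
  have h0 : f 0 = 1 / ((n : ℝ) + 1) := by simp [hf]
  rw [h0]
  have : Tendsto (fun N : ℕ => f N) atTop (nhds 0) := by
    have ht : Tendsto (fun N : ℕ => (N : ℝ) + n + 1) atTop atTop :=
      (tendsto_natCast_atTop_atTop.atTop_add tendsto_const_nhds).atTop_add tendsto_const_nhds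
    simpa [hf, one_div, Pi.inv_def] using ht.inv_tendsto_atTop
  simpa using tendsto_const_nhds.sub this

lemma diff_hasSum (r s : ℕ) (h : s < r) :
    HasSum (fun k : ℕ => 1 / ((k : ℝ) + s + 1) - 1 / ((k : ℝ) + r + 1))
      (∑ j ∈ Finset.Icc (s + 1) r, 1 / (j : ℝ)) := by
  have H := hasSum_sum (s := Finset.Ico s r)
    (f := fun (j : ℕ) (k : ℕ) => 1 / ((k : ℝ) + j + 1) - 1 / ((k : ℝ) + j + 2))
    (fun j _ => telescope_hasSum j)
  have hpt : ∀ k : ℕ, (∑ j ∈ Finset.Ico s r, (1 / ((k : ℝ) + j + 1) - 1 / ((k : ℝ) + j + 2)))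
      = 1 / ((k : ℝ) + s + 1) - 1 / ((k : ℝ) + r + 1) := by
    intro k
    rw [Finset.sum_Ico_eq_sum_range]
    have : ∀ i ∈ range (r - s), (1 / ((k : ℝ) + ((s + i : ℕ) : ℝ) + 1) - 1 / ((k : ℝ) + ((s + i : ℕ) : ℝ) + 2))
        = (fun i : ℕ => 1 / ((k : ℝ) + s + i + 1)) i - (fun i : ℕ => 1 / ((k : ℝ) + s + i + 1)) (i + 1) := by
      intro i _; push_cast; ring_nf
    rw [Finset.sum_congr rfl this, Finset.sum_range_sub']
    have : ((r - s : ℕ) : ℝ) = (r : ℝ) - s := by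
      rw [Nat.cast_sub h.le]
    rw [this]; ring_nf
  have hval : (∑ j ∈ Finset.Ico s r, 1 / ((j : ℝ) + 1))
      = ∑ j ∈ Finset.Icc (s + 1) r, 1 / (j : ℝ) := by
    rw [Finset.sum_Ico_eq_sum_range]
    have : Finset.Icc (s+1) r = Finset.Ico (s+1) (r+1) := by
      rw [Finset.Ico_add_one_right_eq_Icc]
    rw [this, Finset.sum_Ico_eq_sum_range]
    have : r + 1 - (s + 1) = r - s := by omega
    rw [this]
    exact Finset.sum_congr rfl fun i _ => by push_cast; ring_nf
  rw [← hval]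
  exact (funext hpt : _ = _) ▸ H

lemma zeta_shift (m r : ℕ) (hm : 1 < m) :
    HasSum (fun k : ℕ => 1 / ((k : ℝ) + r + 1) ^ m)
      ((∑' n : ℕ, 1 / ((n : ℝ) + 1) ^ m) - ∑ j ∈ Finset.Icc 1 r, 1 / (j : ℝ) ^ m) := by
  set g : ℕ → ℝ := fun n => 1 / ((n : ℝ) + 1) ^ m with hg
  have hsum : Summable g := by
    have h1 : Summable (fun n : ℕ => 1 / (n : ℝ) ^ m) := Real.summable_one_div_nat_pow.mpr hm
    have := (summable_nat_add_iff (f := fun n : ℕ => 1 / (n : ℝ) ^ m) 1).mpr h1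
    refine this.congr fun n => ?_
    simp only [hg]; push_cast; ring_nf
  have hshift : Summable (fun n => g (n + r)) := (summable_nat_add_iff r).mpr hsum
  have hval : ∑' n : ℕ, g (n + r) = (∑' n : ℕ, g n) - ∑ i ∈ Finset.range r, g i := by
    have := hsum.sum_add_tsum_nat_add r
    linarith
  have hIcc : ∑ i ∈ Finset.range r, g i = ∑ j ∈ Finset.Icc 1 r, 1 / (j : ℝ) ^ m := by
    rw [show Finset.Icc 1 r = Finset.Ico 1 (r+1) by rw [Finset.Ico_add_one_right_eq_Icc],
      Finset.sum_Ico_eq_sum_range]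
    have : r + 1 - 1 = r := by omega
    rw [this]
    exact Finset.sum_congr rfl fun i _ => by simp only [hg]; push_cast; ring_nf
  have H : HasSum (fun n => g (n + r)) ((∑' n : ℕ, g n) - ∑ j ∈ Finset.Icc 1 r, 1 / (j : ℝ) ^ m) := by
    rw [← hIcc, ← hval]; exact hshift.hasSum
  have heq : (fun n : ℕ => g (n + r)) = (fun k : ℕ => 1 / ((k : ℝ) + r + 1) ^ m) := by
    funext k; simp only [hg]; push_cast; ring_nf
  exact heq ▸ H

theorem tsum_four_one (r s : ℕ) (h : s < r) :
    (∑' k : ℕ, 1 / (((k : ℝ) + r + 1) ^ 4 * ((k : ℝ) + s + 1))) =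
      (1 / ((r : ℝ) - s) ^ 4) * (∑ j ∈ Finset.Icc (s + 1) r, 1 / (j : ℝ))
      - (1 / ((r : ℝ) - s) ^ 3) *
          ((∑' n : ℕ, 1 / ((n : ℝ) + 1) ^ 2) - ∑ j ∈ Finset.Icc 1 r, 1 / (j : ℝ) ^ 2)
      - (1 / ((r : ℝ) - s) ^ 2) *
          ((∑' n : ℕ, 1 / ((n : ℝ) + 1) ^ 3) - ∑ j ∈ Finset.Icc 1 r, 1 / (j : ℝ) ^ 3)
      - (1 / ((r : ℝ) - s)) *
          ((∑' n : ℕ, 1 / ((n : ℝ) + 1) ^ 4) - ∑ j ∈ Finset.Icc 1 r, 1 / (j : ℝ) ^ 4) := by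
  have h1 := (diff_hasSum r s h).mul_left (1 / ((r : ℝ) - s) ^ 4)
  have h2 := (zeta_shift 2 r (by norm_num)).mul_left (1 / ((r : ℝ) - s) ^ 3)
  have h3 := (zeta_shift 3 r (by norm_num)).mul_left (1 / ((r : ℝ) - s) ^ 2)
  have h4 := (zeta_shift 4 r (by norm_num)).mul_left (1 / ((r : ℝ) - s))
  have H := ((h1.sub h2).sub h3).sub h4
  have hd : (r : ℝ) - s ≠ 0 := by
    have : (s : ℝ) < r := by exact_mod_cast h
    linarith
  have hpt : ∀ k : ℕ,
      1 / ((r : ℝ) - s) ^ 4 * (1 / ((k : ℝ) + s + 1) - 1 / ((k : ℝ) + r + 1))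
      - 1 / ((r : ℝ) - s) ^ 3 * (1 / ((k : ℝ) + r + 1) ^ 2)
      - 1 / ((r : ℝ) - s) ^ 2 * (1 / ((k : ℝ) + r + 1) ^ 3)
      - 1 / ((r : ℝ) - s) * (1 / ((k : ℝ) + r + 1) ^ 4)
      = 1 / (((k : ℝ) + r + 1) ^ 4 * ((k : ℝ) + s + 1)) := by
    intro k
    have ha : ((k : ℝ) + r + 1) ≠ 0 := by positivity
    have hb : ((k : ℝ) + s + 1) ≠ 0 := by positivity
    field_simp
    ring
  exact ((funext hpt : _ = _) ▸ H).tsum_eq
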